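/- The poset of all Dyck paths (of all lengths) ordered by componentwise comparison of their infinite binary words (with infinitely many appended 0's) is a lattice: the componentwise maximum of two Dyck words is a Dyck word giving the join, and a meet also exists (given by truncating the componentwise minimum at the first point where 0's outnumber 1's). -/

import Mathlib

/-- A Dyck word: every prefix has at least as many up steps (`true`) as down
steps (`false`), and the total numbers of up and down steps are equal. -/
def IsDyck (w : List Bool) : Prop :=
  (∀ p : ℕ, (w.take p).count false ≤ (w.take p).count true) ∧
    w.count false = w.count true

/-- The infinite binary word of a Dyck path: its steps (`true` = 1 = up,
`false` = 0 = down) followed by infinitely many 0's. -/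
def wordOf (w : List Bool) : ℕ → Bool := fun i => w.getD i false

/-- Number of `true`s among the first `p` letters of an infinite word. -/
def cnt (f : ℕ → Bool) (p : ℕ) : ℕ := (List.range p).countP f

lemma cnt_succ (f : ℕ → Bool) (p : ℕ) : cnt f (p+1) = cnt f p + if f p then 1 else 0 := by
  simp [cnt, List.range_succ, List.countP_append, List.countP_cons]

lemma cnt_mono (f : ℕ → Bool) {p q : ℕ} (h : p ≤ q) : cnt f p ≤ cnt f q :=
  List.Sublist.countP_le (List.range_sublist.2 h)

lemma cnt_mono_f {f g : ℕ → Bool} (h : ∀ i, f i = true → g i = true) (p : ℕ) :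
    cnt f p ≤ cnt g p :=
  List.countP_mono_left (fun a _ => h a)

lemma cnt_stab {f : ℕ → Bool} {N : ℕ} (hf : ∀ i, N ≤ i → f i = false) {p : ℕ} (h : N ≤ p) :
    cnt f p = cnt f N := by
  induction p, h using Nat.le_induction with
  | base => rfl
  | succ p hp ih => rw [cnt_succ, hf p hp, ih]; simp

lemma cnt_congr {f g : ℕ → Bool} {p : ℕ} (h : ∀ i < p, f i = g i) : cnt f p = cnt g p := by
  unfold cnt
  apply List.countP_congr
  intro a ha
  rw [h a (List.mem_range.1 ha)]

lemma count_false_add_count_true (l : List Bool) : l.count false + l.count true = l.length := by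
  induction l with
  | nil => rfl
  | cons a l ih => cases a <;> simp [List.count_cons] <;> omega

lemma count_true_take (w : List Bool) (p : ℕ) : (w.take p).count true = cnt (wordOf w) p := by
  induction p with
  | zero => simp [cnt]
  | succ p ih =>
    rw [List.take_succ, List.count_append, ih, cnt_succ]
    congr 1
    by_cases hp : p < w.length
    · simp only [List.getElem?_eq_getElem hp, Option.toList_some, wordOf, List.getD,
        List.count_singleton]
      simp only [List.getD_eq_getElem?_getD, List.getElem?_eq_getElem hp, Option.getD_some]
      cases w[p] <;> simp
    · simp [List.getElem?_eq_none (le_of_not_gt hp), wordOf,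
        List.getD_eq_default _ _ (le_of_not_gt hp)]

lemma wordOf_eq_false {w : List Bool} {i : ℕ} (h : w.length ≤ i) : wordOf w i = false :=
  List.getD_eq_default _ _ h

lemma wordOf_map_range (f : ℕ → Bool) (n i : ℕ) :
    wordOf ((List.range n).map f) i = if i < n then f i else false := by
  by_cases h : i < n
  · rw [wordOf, List.getD_eq_getElem]
    · simp [h]
    · simpa using h
  · have : n ≤ i := le_of_not_gt h
    rw [wordOf, List.getD_eq_default]
    · simp [h]
    · simpa using this

lemma dyck_prefix {w : List Bool} (hw : IsDyck w) (p : ℕ) :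
    min p w.length ≤ 2 * cnt (wordOf w) p := by
  have h1 := hw.1 p
  have h2 := count_false_add_count_true (w.take p)
  have h3 := count_true_take w p
  rw [List.length_take] at h2
  omega

lemma dyck_len {w : List Bool} (hw : IsDyck w) : w.length = 2 * cnt (wordOf w) w.length := by
  have h2 := count_false_add_count_true w
  have h3 := hw.2
  have h4 := count_true_take w w.length
  rw [List.take_length] at h4
  omega

lemma dyck_of {w : List Bool} (h1 : ∀ p, min p w.length ≤ 2 * cnt (wordOf w) p)
    (h2 : w.length = 2 * cnt (wordOf w) w.length) : IsDyck w := by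
  have key : ∀ p, (w.take p).count false ≤ (w.take p).count true := by
    intro p
    have ha := count_false_add_count_true (w.take p)
    have hb := count_true_take w p
    have hc := h1 p
    rw [List.length_take] at ha
    omega
  refine ⟨key, ?_⟩
  have ha := count_false_add_count_true w
  have h4 := count_true_take w w.length
  rw [List.take_length] at h4
  omega

/-- The poset of all Dyck paths, ordered by componentwise comparison of their
infinite binary words, is a lattice: the componentwise maximum of two Dyck
words is a Dyck word and gives the join, and a meet also exists. -/
theorem dyck_poset_is_lattice (D E : List Bool) (hD : IsDyck D) (hE : IsDyck E) :
    (∃ J : List Bool, IsDyck J ∧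
      (∀ i : ℕ, wordOf J i = wordOf D i ⊔ wordOf E i)) ∧
    (∃ M : List Bool, IsDyck M ∧
      (∀ i : ℕ, wordOf M i ≤ wordOf D i ∧ wordOf M i ≤ wordOf E i) ∧
      ∀ F : List Bool, IsDyck F → (∀ i : ℕ, wordOf F i ≤ wordOf D i) →
        (∀ i : ℕ, wordOf F i ≤ wordOf E i) →
        ∀ i : ℕ, wordOf F i ≤ wordOf M i) := by
  constructor
  · -- join
    set g : ℕ → Bool := fun i => wordOf D i || wordOf E i with hg
    set N := max D.length E.length with hN
    set T := cnt g N with hT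
    have hgD : ∀ i, wordOf D i = true → g i = true := by intro i h; simp [hg, h]
    have hgE : ∀ i, wordOf E i = true → g i = true := by intro i h; simp [hg, h]
    have hgfalse : ∀ i, N ≤ i → g i = false := by
      intro i hi
      simp [hg, wordOf_eq_false (le_trans (le_max_left _ _) hi),
        wordOf_eq_false (le_trans (le_max_right _ _) hi)]
    have hNT : N ≤ 2 * T := by
      have hDl := dyck_len hD
      have hEl := dyck_len hE
      have hDs : cnt (wordOf D) N = cnt (wordOf D) D.length :=
        cnt_stab (fun i hi => wordOf_eq_false hi) (le_max_left _ _)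
      have hEs : cnt (wordOf E) N = cnt (wordOf E) E.length :=
        cnt_stab (fun i hi => wordOf_eq_false hi) (le_max_right _ _)
      have h1 : cnt (wordOf D) N ≤ T := cnt_mono_f hgD N
      have h2 : cnt (wordOf E) N ≤ T := cnt_mono_f hgE N
      rw [hN, max_le_iff]
      omega
    set J := (List.range (2*T)).map g with hJ
    have hw : ∀ i, wordOf J i = g i := by
      intro i
      rw [hJ, wordOf_map_range]
      by_cases h : i < 2*T
      · simp [h]
      · simp only [h, if_false]
        exact (hgfalse i (by omega)).symm
    have hlen : J.length = 2*T := by simp [hJ]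
    have hcnt : ∀ p, cnt (wordOf J) p = cnt g p := fun p => cnt_congr (fun i _ => hw i)
    refine ⟨J, ?_, ?_⟩
    · apply dyck_of
      · intro p
        rw [hcnt, hlen]
        by_cases hp : p ≤ N
        · have hcase : p ≤ D.length ∨ p ≤ E.length := by
            rw [hN] at hp
            rcases le_max_iff.1 hp with h | h
            · exact Or.inl h
            · exact Or.inr h
          refine le_trans (min_le_left _ _) ?_
          rcases hcase with h | h
          · have h1 := dyck_prefix hD p
            have h2 := cnt_mono_f hgD p
            rw [min_eq_left h] at h1
            omega
          · have h1 := dyck_prefix hE p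
            have h2 := cnt_mono_f hgE p
            rw [min_eq_left h] at h1
            omega
        · have hs : cnt g p = T := by
            rw [cnt_stab hgfalse (le_of_not_ge hp)]
          rw [hs]
          exact min_le_right _ _
      · rw [hcnt, hlen, cnt_stab hgfalse hNT]
    · intro i
      rw [hw i]
      rfl
  · -- meet
    set m : ℕ → Bool := fun i => wordOf D i && wordOf E i with hm
    have hmfalse : ∀ i, D.length ≤ i → m i = false := by
      intro i hi; simp [hm, wordOf_eq_false hi]
    have hex : ∃ p, 2 * cnt m p < p := by
      refine ⟨2 * cnt m D.length + 1, ?_⟩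
      have h1 : cnt m (2 * cnt m D.length + 1) ≤ cnt m D.length := by
        by_cases h : D.length ≤ 2 * cnt m D.length + 1
        · rw [cnt_stab hmfalse h]
        · exact cnt_mono _ (by omega)
      omega
    set p0 := Nat.find hex with hp0
    have hP : 2 * cnt m p0 < p0 := Nat.find_spec hex
    have hmin : ∀ p < p0, p ≤ 2 * cnt m p := fun p hp => le_of_not_gt (Nat.find_min hex hp)
    set k := p0 - 1 with hk
    have hps : p0 = k + 1 := by omega
    have hkk : k ≤ 2 * cnt m k := hmin k (by omega)
    have hmk : m k = false := by
      by_contra h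
      rw [Bool.not_eq_false] at h
      have hs := cnt_succ m k
      rw [h, if_pos rfl] at hs
      rw [hps] at hP
      omega
    have hck : 2 * cnt m k = k := by
      have hs := cnt_succ m k
      rw [hmk] at hs
      simp at hs
      rw [hps] at hP
      omega
    set M := (List.range k).map m with hM
    have hw : ∀ i, wordOf M i = if i < k then m i else false := by
      intro i; rw [hM]; exact wordOf_map_range m k i
    have hMfalse : ∀ i, k ≤ i → wordOf M i = false := by
      intro i hi; rw [hw]; simp [not_lt.2 hi]
    have hlen : M.length = k := by simp [hM]
    have hcnt : ∀ p, p ≤ k → cnt (wordOf M) p = cnt m p := by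
      intro p hp
      apply cnt_congr
      intro i hi
      rw [hw]
      simp [lt_of_lt_of_le hi hp]
    refine ⟨M, ?_, ?_, ?_⟩
    · apply dyck_of
      · intro p
        rw [hlen]
        by_cases hp : p ≤ k
        · rw [hcnt p hp]
          exact le_trans (min_le_left _ _) (hmin p (by omega))
        · rw [cnt_stab hMfalse (le_of_not_ge hp), hcnt k le_rfl]
          exact le_trans (min_le_right _ _) (by omega)
      · rw [hlen, hcnt k le_rfl]
        omega
    · intro i
      rw [hw]
      by_cases h : i < k
      · simp only [h, if_true]
        exact ⟨Bool.and_le_left _ _, Bool.and_le_right _ _⟩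
      · simp only [h, if_false]
        exact ⟨Bool.false_le _, Bool.false_le _⟩
    · intro F hF hFD hFE i
      rw [Bool.le_iff_imp]
      intro hFi
      have hFm : ∀ j, wordOf F j = true → m j = true := by
        intro j hj
        simp only [hm, Bool.and_eq_true]
        exact ⟨Bool.le_iff_imp.1 (hFD j) hj, Bool.le_iff_imp.1 (hFE j) hj⟩
      have hik : i < k := by
        by_contra hik
        have hiF : i < F.length := by
          by_contra h
          rw [wordOf_eq_false (le_of_not_gt h)] at hFi
          exact absurd hFi (by simp)
        have h1 := dyck_prefix hF p0
        have h2 := cnt_mono_f hFm p0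
        have h3 : p0 ≤ F.length := by omega
        rw [min_eq_left h3] at h1
        omega
      rw [hw]
      simp only [hik, if_true]
      exact hFm i hFi
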